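/- For every integer l with 1 ≤ l ≤ m−1 and every y ∈ ℝ^{2m}, the l-fold iterated Laplacian of η₀ satisfies Δ^l η₀(y) = (m/β*) Σ_{k=0}^{l} a_{k,l} |y|^{2k} / (4 + |y|²)^{2l}, where a_{k,l} := (−1)^l (l−1)! · binom(l,k) · 2^{4l−2k} · (m+l−1)! (m−l+k−1)! / ( (m+k−1)! (m−l−1)! ). -/

import Mathlib

open MeasureTheory Real
noncomputable section

/-- The Laplacian of `u : ℝ^n → ℝ` at `x`, as the sum of second partial derivatives. -/
def lap {n : ℕ} (u : EuclideanSpace ℝ (Fin n) → ℝ) (x : EuclideanSpace ℝ (Fin n)) : ℝ :=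
  ∑ i : Fin n, fderiv ℝ (fun y => fderiv ℝ u y (EuclideanSpace.single i 1)) x
    (EuclideanSpace.single i 1)

/-- The `l`-fold iterated Laplacian `Δ^l u`. -/
def iterLap {n : ℕ} (l : ℕ) (u : EuclideanSpace ℝ (Fin n) → ℝ) :
    EuclideanSpace ℝ (Fin n) → ℝ := lap^[l] u

/-- The Adams critical exponent `β* = 2^{2m} π^m m!`. -/
def betaStar (m : ℕ) : ℝ := 2^(2*m) * Real.pi^m * (Nat.factorial m : ℝ)

/-- `ω_{2m} = 2^{m+1} π^m / (2m−1)‼`, the volume of the unit sphere `S^{2m} ⊂ ℝ^{2m+1}`. -/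
def omega2m (m : ℕ) : ℝ := 2^(m+1) * Real.pi^m / (Nat.doubleFactorial (2*m - 1) : ℝ)

/-- The standard bubble `η₀(y) = −(m/β*) log(1 + |y|²/4)`. -/
def eta0 (m : ℕ) (y : EuclideanSpace ℝ (Fin (2*m))) : ℝ :=
  -((m : ℝ) / betaStar m) * Real.log (1 + ‖y‖^2 / 4)

/-- The coefficients `a_{k,l}` in the formula for `Δ^l η₀`. -/
def acoef (m k l : ℕ) : ℝ :=
  (-1)^l * (Nat.factorial (l-1) : ℝ) * (Nat.choose l k : ℝ) * 2^(4*l - 2*k) *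
    (Nat.factorial (m+l-1) : ℝ) * (Nat.factorial (m-l+k-1) : ℝ) /
    ((Nat.factorial (m+k-1) : ℝ) * (Nat.factorial (m-l-1) : ℝ))

set_option linter.unusedVariables false
set_option linter.unreachableTactic false
set_option linter.unusedTactic false
set_option maxHeartbeats 1000000

lemma sq_hasFDerivAt {n : ℕ} (x : EuclideanSpace ℝ (Fin n)) :
    HasFDerivAt (fun z : EuclideanSpace ℝ (Fin n) => ‖z‖^2) (2 • (innerSL ℝ x)) x := by
  simpa using (hasFDerivAt_id x).norm_sq

lemma radial_fderiv {n : ℕ} (h h₁ : ℝ → ℝ) (H1 : ∀ s, 0 ≤ s → HasDerivAt h (h₁ s) s)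
    (x : EuclideanSpace ℝ (Fin n)) :
    HasFDerivAt (fun z : EuclideanSpace ℝ (Fin n) => h (‖z‖^2))
      (h₁ (‖x‖^2) • (2 • innerSL ℝ x)) x :=
  (H1 _ (sq_nonneg _)).comp_hasFDerivAt x (sq_hasFDerivAt x)

lemma lap_radial {n : ℕ} (h h₁ h₂ : ℝ → ℝ)
    (H1 : ∀ s, 0 ≤ s → HasDerivAt h (h₁ s) s)
    (H2 : ∀ s, 0 ≤ s → HasDerivAt h₁ (h₂ s) s)
    (y : EuclideanSpace ℝ (Fin n)) :
    lap (fun z => h (‖z‖^2)) y = 4*‖y‖^2*(h₂ (‖y‖^2)) + 2*(n:ℝ)*(h₁ (‖y‖^2)) := by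
  have key : ∀ i : Fin n,
      fderiv ℝ (fun x => fderiv ℝ (fun z : EuclideanSpace ℝ (Fin n) => h (‖z‖^2)) x
          (EuclideanSpace.single i 1)) y (EuclideanSpace.single i 1)
        = h₂ (‖y‖^2) * (2*(y i)) * (2*(y i)) + h₁ (‖y‖^2) * 2 := by
    intro i
    have e1 : (fun x : EuclideanSpace ℝ (Fin n) =>
        fderiv ℝ (fun z : EuclideanSpace ℝ (Fin n) => h (‖z‖^2)) x (EuclideanSpace.single i 1))
        = fun x : EuclideanSpace ℝ (Fin n) => h₁ (‖x‖^2) * (2 * x i) := by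
      funext x
      rw [(radial_fderiv h h₁ H1 x).fderiv]
      simp [real_inner_comm, EuclideanSpace.inner_single_right]
    rw [e1]
    have efun : (fun x : EuclideanSpace ℝ (Fin n) => 2 * x i)
        = fun x => ((2:ℝ) • innerSL ℝ (EuclideanSpace.single i (1:ℝ))) x := by
      funext x
      simp [EuclideanSpace.inner_single_left]
    have hB : HasFDerivAt (fun x : EuclideanSpace ℝ (Fin n) => 2 * x i)
        ((2:ℝ) • innerSL ℝ (EuclideanSpace.single i 1)) y := by
      rw [efun]; exact (((2:ℝ) • innerSL ℝ (EuclideanSpace.single i (1:ℝ)))).hasFDerivAt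
    have hA := radial_fderiv h₁ h₂ H2 y
    have hAB : HasFDerivAt (fun x : EuclideanSpace ℝ (Fin n) => h₁ (‖x‖^2) * (2 * x i)) _ y :=
      hA.mul hB
    rw [hAB.fderiv]
    simp [EuclideanSpace.inner_single_left, EuclideanSpace.inner_single_right,
      real_inner_comm]
    ring
  unfold lap
  rw [Finset.sum_congr rfl (fun i _ => key i)]
  rw [Finset.sum_add_distrib, Finset.sum_const]
  have hs : ∑ i : Fin n, (y i)^2 = ‖y‖^2 := by
    rw [EuclideanSpace.norm_eq, Real.sq_sqrt (by positivity)]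
    simp [sq_abs]
  have hnorm : ∑ i : Fin n, h₂ (‖y‖^2) * (2*(y i)) * (2*(y i))
      = 4 * ‖y‖^2 * h₂ (‖y‖^2) := by
    calc ∑ i : Fin n, h₂ (‖y‖^2) * (2*(y i)) * (2*(y i))
        = ∑ i : Fin n, (y i)^2 * (4 * h₂ (‖y‖^2)) :=
          Finset.sum_congr rfl (fun i _ => by ring)
      _ = (∑ i : Fin n, (y i)^2) * (4 * h₂ (‖y‖^2)) := by rw [← Finset.sum_mul]
      _ = 4 * ‖y‖^2 * h₂ (‖y‖^2) := by rw [hs]; ring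
  rw [hnorm]
  simp
  ring

/-- term `a s^k/(4+s)^p` and its first two derivatives -/
def D0 (a : ℝ) (k p : ℕ) : ℝ → ℝ := fun s => a * s^k / (4+s)^p
def D1 (a : ℝ) (k p : ℕ) : ℝ → ℝ := fun s =>
  a * ((k:ℝ) * s^(k-1) * (4+s) - (p:ℝ) * s^k) / (4+s)^(p+1)
def D2 (a : ℝ) (k p : ℕ) : ℝ → ℝ := fun s =>
  a * ((k:ℝ)*((k:ℝ)-1)*s^(k-2)*(4+s)^2 - 2*(p:ℝ)*(k:ℝ)*s^(k-1)*(4+s)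
      + (p:ℝ)*((p:ℝ)+1)*s^k) / (4+s)^(p+2)

lemma D0_hasDerivAt (a : ℝ) (k p : ℕ) (hp : 1 ≤ p) {s : ℝ} (hs : 0 ≤ s) :
    HasDerivAt (D0 a k p) (D1 a k p s) s := by
  have h4 : (4:ℝ) + s ≠ 0 := by positivity
  have hden : HasDerivAt (fun s : ℝ => (4+s)^p) ((p:ℝ) * (4+s)^(p-1) * 1) s :=
    (((hasDerivAt_id s).const_add 4)).pow p
  have hnum : HasDerivAt (fun s : ℝ => a * s^k) (a * ((k:ℝ) * s^(k-1))) s :=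
    (hasDerivAt_pow k s).const_mul a
  have : HasDerivAt (D0 a k p) _ s := hnum.div hden (pow_ne_zero _ h4)
  convert this using 1
  obtain ⟨p', rfl⟩ : ∃ p', p = p' + 1 := ⟨p - 1, by omega⟩
  simp only [Nat.add_sub_cancel, D1]
  field_simp
  ring

lemma D1_hasDerivAt (a : ℝ) (k p : ℕ) {s : ℝ} (hs : 0 ≤ s) :
    HasDerivAt (D1 a k p) (D2 a k p s) s := by
  have h4 : (4:ℝ) + s ≠ 0 := by positivity
  have hden : HasDerivAt (fun s : ℝ => (4+s)^(p+1)) (((p:ℝ)+1) * (4+s)^p * 1) s := by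
    have := (((hasDerivAt_id s).const_add 4)).pow (p+1)
    simpa [Pi.pow_def] using this
  rcases k with _ | k
  · have e : D1 a 0 p = fun s : ℝ => (-(a*(p:ℝ))) / (4+s)^(p+1) := by
      funext u; simp only [D1]; push_cast; ring_nf
    rw [e]
    have : HasDerivAt (fun s : ℝ => (-(a*(p:ℝ))) / (4+s)^(p+1)) _ s :=
      (hasDerivAt_const s (-(a*(p:ℝ)))).div hden (pow_ne_zero _ h4)
    convert this using 1
    simp only [D2]
    push_cast
    field_simp
    ring
  · have e : D1 a (k+1) p
        = fun s : ℝ => (a * (((k:ℝ)+1)*(s^k*(4+s)) - (p:ℝ)*s^(k+1))) / (4+s)^(p+1) := by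
      funext u; simp only [D1, Nat.add_sub_cancel]; push_cast; ring_nf
    rw [e]
    have h1 : HasDerivAt (fun s : ℝ => s^k*(4+s)) ((k:ℝ)*s^(k-1)*(4+s) + s^k*1) s := by
      have := (hasDerivAt_pow k s).mul ((hasDerivAt_id s).const_add 4)
      simpa [Pi.mul_def] using this
    have h2 : HasDerivAt (fun s : ℝ => a * (((k:ℝ)+1)*(s^k*(4+s)) - (p:ℝ)*s^(k+1)))
        (a * (((k:ℝ)+1)*((k:ℝ)*s^(k-1)*(4+s) + s^k*1) - (p:ℝ)*(((k:ℝ)+1)*s^(k+1-1)))) s := by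
      have : HasDerivAt (fun s : ℝ => a * (((k:ℝ)+1)*(s^k*(4+s)) - (p:ℝ)*s^(k+1))) _ s :=
        ((h1.const_mul ((k:ℝ)+1)).sub ((hasDerivAt_pow (k+1) s).const_mul (p:ℝ))).const_mul a
      convert this using 1
      push_cast
      ring
    have : HasDerivAt (fun s : ℝ => (a * (((k:ℝ)+1)*(s^k*(4+s)) - (p:ℝ)*s^(k+1))) / (4+s)^(p+1)) _ s :=
      h2.div hden (pow_ne_zero _ h4)
    convert this using 1
    simp only [D2, Nat.add_sub_cancel]
    rcases k with _ | k
    · push_cast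
      field_simp
      ring
    · simp only [Nat.add_sub_cancel]
      push_cast
      field_simp
      ring

lemma acoef_eq_zero (m k l : ℕ) (h : l < k) : acoef m k l = 0 := by
  simp [acoef, Nat.choose_eq_zero_of_lt h]

lemma choose_rel (l k : ℕ) :
    ((k:ℝ)+1) * (Nat.choose l (k+1) : ℝ) = ((l:ℝ) - (k:ℝ)) * (Nat.choose l k : ℝ) := by
  rcases le_or_gt (k+1) l with hkl | hkl
  · have h := Nat.choose_succ_right_eq l k
    have h2 : ((Nat.choose l (k+1) * (k+1) : ℕ) : ℝ) = ((Nat.choose l k * (l-k) : ℕ) : ℝ) := by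
      rw [h]
    push_cast [Nat.cast_sub (by omega : k ≤ l)] at h2
    linarith
  · rcases eq_or_lt_of_le (by omega : l ≤ k) with rfl | hlk
    · simp [Nat.choose_eq_zero_of_lt hkl]
    · simp [Nat.choose_eq_zero_of_lt hkl, Nat.choose_eq_zero_of_lt hlk]

lemma factorial_cast_pos (n : ℕ) : (0:ℝ) < (Nat.factorial n : ℝ) := by
  exact_mod_cast Nat.factorial_pos n

lemma acoef_01 (m : ℕ) (hm : 2 ≤ m) : acoef m 0 1 = -(16 * (m:ℝ)) := by
  have e1 : m + 1 - 1 = (m-1) + 1 := by omega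
  have e2 : m - 1 + 0 - 1 = m - 2 := by omega
  have e3 : m + 0 - 1 = m - 1 := by omega
  have e4 : m - 1 - 1 = m - 2 := by omega
  have e5 : ((m - 1 : ℕ) : ℝ) = (m:ℝ) - 1 := by
    push_cast [Nat.cast_sub (by omega : 1 ≤ m)]; ring
  simp only [acoef, e1, e2, e3, e4, Nat.factorial_succ, Nat.choose_zero_right]
  have h1 := (factorial_cast_pos (m-1)).ne'
  have h2 := (factorial_cast_pos (m-2)).ne'
  push_cast
  rw [e5]
  field_simp
  ring

lemma acoef_11 (m : ℕ) (hm : 2 ≤ m) : acoef m 1 1 = -(4 * (m:ℝ) - 4) := by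
  have e1 : m + 1 - 1 = (m-1) + 1 := by omega
  have e2 : m - 1 + 1 - 1 = (m-2) + 1 := by omega
  have e3 : m - 1 - 1 = m - 2 := by omega
  have e5 : ((m - 2 : ℕ) : ℝ) = (m:ℝ) - 2 := by
    push_cast [Nat.cast_sub (by omega : 2 ≤ m)]; ring
  simp only [acoef, e1, e2, e3, Nat.factorial_succ, Nat.choose_self]
  have h1 := (factorial_cast_pos (m-1)).ne'
  have h2 := (factorial_cast_pos (m-2)).ne'
  push_cast
  rw [e5]
  field_simp
  ring


-- closed forms with common atoms, for the j = 0 identity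
lemma acoefA0 (m l : ℕ) (hl : 1 ≤ l) (hml : l + 2 ≤ m) :
    acoef m 0 l = (-1:ℝ)^l * ((l-1).factorial) * (4 * 2^(4*l-2)) *
      ((m+l-1).factorial) / ((m-1).factorial) := by
  have c2 : 4*l - 2*0 = (4*l-2)+2 := by omega
  have a5 : m+0-1 = m-1 := by omega
  have c3 : m-l+0-1 = m-l-1 := by omega
  simp only [acoef, c2, a5, c3, Nat.choose_zero_right, pow_add]
  have h1 := (factorial_cast_pos (m-l-1)).ne'
  have h2 := (factorial_cast_pos (m-1)).ne'
  push_cast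
  field_simp
  ring

lemma acoefA1 (m l : ℕ) (hl : 1 ≤ l) (hml : l + 2 ≤ m) :
    acoef m 1 l = (-1:ℝ)^l * ((l-1).factorial) * (l:ℝ) * (2^(4*l-2)) *
      ((m+l-1).factorial) * ((m:ℝ)-l) / ((m:ℝ) * (m-1).factorial) := by
  have b2 : 4*l - 2*1 = 4*l-2 := by omega
  have b3 : m-l+1-1 = (m-l-1)+1 := by omega
  have b4 : m+1-1 = (m-1)+1 := by omega
  have d1 : ((m-l-1 : ℕ):ℝ) = (m:ℝ) - l - 1 := by
    rw [Nat.cast_sub (by omega : 1 ≤ m - l), Nat.cast_sub (by omega : l ≤ m)]; push_cast; ring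
  have d2 : ((m-1 : ℕ):ℝ) = (m:ℝ) - 1 := by
    rw [Nat.cast_sub (by omega : 1 ≤ m)]; push_cast; ring
  simp only [acoef, b2, b3, b4, Nat.factorial_succ, Nat.choose_one_right]
  have h1 := (factorial_cast_pos (m-l-1)).ne'
  have h2 := (factorial_cast_pos (m-1)).ne'
  have h3 : (m:ℝ) ≠ 0 := Nat.cast_ne_zero.2 (by omega)
  push_cast
  rw [d1, d2]
  simp only [sub_add_cancel]
  field_simp

lemma acoefA0' (m l : ℕ) (hl : 1 ≤ l) (hml : l + 2 ≤ m) :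
    acoef m 0 (l+1) = -((-1:ℝ)^l) * (l:ℝ) * ((l-1).factorial) * (64 * 2^(4*l-2)) *
      ((m:ℝ)+l) * ((m+l-1).factorial) / ((m-1).factorial) := by
  have a1 : l + 1 - 1 = l := by omega
  have a2 : 4*(l+1) - 2*0 = (4*l-2)+6 := by omega
  have a3 : m+(l+1)-1 = (m+l-1)+1 := by omega
  have a4 : m-(l+1)+0-1 = m-l-2 := by omega
  have a5 : m+0-1 = m-1 := by omega
  have a6 : m-(l+1)-1 = m-l-2 := by omega
  have efl : (l.factorial : ℝ) = l * (l-1).factorial := by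
    rw [← Nat.mul_factorial_pred (by omega : l ≠ 0)]; push_cast; ring
  have d3 : ((m+l-1 : ℕ):ℝ) = (m:ℝ) + l - 1 := by
    rw [Nat.cast_sub (by omega : 1 ≤ m + l)]; push_cast; ring
  simp only [acoef, a1, a2, a3, a4, a5, a6, Nat.factorial_succ, Nat.choose_zero_right,
    pow_add, pow_succ, efl]
  have h1 := (factorial_cast_pos (m-l-2)).ne'
  have h2 := (factorial_cast_pos (m-1)).ne'
  push_cast
  rw [d3]
  field_simp
  ring

lemma ident0 (m l : ℕ) (hl : 1 ≤ l) (hml : l + 2 ≤ m) :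
    acoef m 0 (l+1) = 64*(m:ℝ)*acoef m 1 l - 32*(l:ℝ)*(m:ℝ)*acoef m 0 l := by
  rw [acoefA0 m l hl hml, acoefA1 m l hl hml, acoefA0' m l hl hml]
  have h2 := (factorial_cast_pos (m-1)).ne'
  have h3 : (m:ℝ) ≠ 0 := Nat.cast_ne_zero.2 (by omega)
  field_simp
  ring

section identK
variable (m l k : ℕ)

lemma acoefBk (hml : l + 2 ≤ m) (hk2 : k + 2 ≤ 2*l) :
    acoef m k l = (-1:ℝ)^l * ((l-1).factorial) * (l.choose k) * (16 * 2^(4*l-2*k-4)) *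
      ((m+l-1).factorial) * ((m-l+k-1).factorial) /
      (((m+k-1).factorial) * ((m-l-1).factorial)) := by
  rw [acoef, show 4*l-2*k = (4*l-2*k-4)+4 from by omega, pow_add]
  norm_num
  ring

lemma acoefB1 (hml : l + 2 ≤ m) (hk2 : k + 2 ≤ 2*l) :
    acoef m (k+1) l = (-1:ℝ)^l * ((l-1).factorial) * (l.choose (k+1)) *
      (4 * 2^(4*l-2*k-4)) * ((m+l-1).factorial) * (((m:ℝ)-l+k) * ((m-l+k-1).factorial)) /
      ((((m:ℝ)+k) * ((m+k-1).factorial)) * ((m-l-1).factorial)) := by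
  have b2 : 4*l - 2*(k+1) = (4*l-2*k-4)+2 := by omega
  have b3 : m-l+(k+1)-1 = (m-l+k-1)+1 := by omega
  have b4 : m+(k+1)-1 = (m+k-1)+1 := by omega
  have dP : ((m-l+k-1 : ℕ):ℝ) = (m:ℝ) - l + k - 1 := by
    rw [Nat.cast_sub (by omega : 1 ≤ m - l + k)]
    push_cast [Nat.cast_sub (show l ≤ m by omega)]; ring
  have dQ : ((m+k-1 : ℕ):ℝ) = (m:ℝ) + k - 1 := by
    rw [Nat.cast_sub (by omega : 1 ≤ m + k)]; push_cast; ring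
  simp only [acoef, b2, b3, b4, Nat.factorial_succ, pow_add]
  have h1 := (factorial_cast_pos (m-l-1)).ne'
  have h2 := (factorial_cast_pos (m+k-1)).ne'
  have h3 : (m:ℝ) + k ≠ 0 := by
    have : (1:ℝ) ≤ (m:ℝ) := by exact_mod_cast (by omega : 1 ≤ m)
    have : (0:ℝ) ≤ (k:ℝ) := Nat.cast_nonneg k
    intro h; linarith
  push_cast
  rw [dP, dQ]
  simp only [sub_add_cancel]
  field_simp
  all_goals ring_nf
  all_goals tauto

lemma acoefB2 (hml : l + 2 ≤ m) (hk2 : k + 2 ≤ 2*l) :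
    acoef m (k+2) l = (-1:ℝ)^l * ((l-1).factorial) * (l.choose (k+2)) *
      (2^(4*l-2*k-4)) * ((m+l-1).factorial) *
      ((((m:ℝ)-l+k+1) * ((m:ℝ)-l+k)) * ((m-l+k-1).factorial)) /
      (((((m:ℝ)+k+1) * ((m:ℝ)+k)) * ((m+k-1).factorial)) * ((m-l-1).factorial)) := by
  have b2 : 4*l - 2*(k+2) = 4*l-2*k-4 := by omega
  have b3 : m-l+(k+2)-1 = ((m-l+k-1)+1)+1 := by omega
  have b4 : m+(k+2)-1 = ((m+k-1)+1)+1 := by omega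
  have dP : ((m-l+k-1 : ℕ):ℝ) = (m:ℝ) - l + k - 1 := by
    rw [Nat.cast_sub (by omega : 1 ≤ m - l + k)]
    push_cast [Nat.cast_sub (show l ≤ m by omega)]; ring
  have dQ : ((m+k-1 : ℕ):ℝ) = (m:ℝ) + k - 1 := by
    rw [Nat.cast_sub (by omega : 1 ≤ m + k)]; push_cast; ring
  simp only [acoef, b2, b3, b4, Nat.factorial_succ]
  have h1 := (factorial_cast_pos (m-l-1)).ne'
  have h2 := (factorial_cast_pos (m+k-1)).ne'
  have h3 : (m:ℝ) + k ≠ 0 := by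
    have : (1:ℝ) ≤ (m:ℝ) := by exact_mod_cast (by omega : 1 ≤ m)
    have : (0:ℝ) ≤ (k:ℝ) := Nat.cast_nonneg k
    intro h; linarith
  have h4 : (m:ℝ) + k + 1 ≠ 0 := by
    have : (1:ℝ) ≤ (m:ℝ) := by exact_mod_cast (by omega : 1 ≤ m)
    have : (0:ℝ) ≤ (k:ℝ) := Nat.cast_nonneg k
    intro h; linarith
  push_cast
  rw [dP, dQ]
  simp only [sub_add_cancel]
  field_simp
  all_goals ring_nf
  all_goals tauto

lemma acoefB' (hml : l + 2 ≤ m) (hk2 : k + 2 ≤ 2*l) :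
    acoef m (k+1) (l+1) = -((-1:ℝ)^l) * (l:ℝ) * ((l-1).factorial) *
      ((l.choose k : ℝ) + (l.choose (k+1) : ℝ)) * (64 * 2^(4*l-2*k-4)) *
      (((m:ℝ)+l) * ((m:ℝ)-l-1)) * ((m+l-1).factorial) * ((m-l+k-1).factorial) /
      ((((m:ℝ)+k) * ((m+k-1).factorial)) * ((m-l-1).factorial)) := by
  have a1 : l + 1 - 1 = l := by omega
  have a2 : 4*(l+1) - 2*(k+1) = (4*l-2*k-4)+6 := by omega
  have a3 : m+(l+1)-1 = (m+l-1)+1 := by omega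
  have a4 : m-(l+1)+(k+1)-1 = m-l+k-1 := by omega
  have a5 : m+(k+1)-1 = (m+k-1)+1 := by omega
  have a6 : m-(l+1)-1 = m-l-2 := by omega
  have efl : (l.factorial : ℝ) = l * (l-1).factorial := by
    rw [← Nat.mul_factorial_pred (by omega : l ≠ 0)]; push_cast; ring
  have eD : ((m-l-1).factorial : ℝ) = ((m:ℝ)-l-1) * ((m-l-2).factorial) := by
    rw [show m-l-1 = (m-l-2)+1 from by omega, Nat.factorial_succ]
    have : ((m-l-2 : ℕ):ℝ) = (m:ℝ) - l - 2 := by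
      rw [Nat.cast_sub (by omega : 2 ≤ m - l), Nat.cast_sub (by omega : l ≤ m)]
      push_cast; ring
    push_cast [this]; ring
  have dR : ((m+l-1 : ℕ):ℝ) = (m:ℝ) + l - 1 := by
    rw [Nat.cast_sub (by omega : 1 ≤ m + l)]; push_cast; ring
  have dQ : ((m+k-1 : ℕ):ℝ) = (m:ℝ) + k - 1 := by
    rw [Nat.cast_sub (by omega : 1 ≤ m + k)]; push_cast; ring
  simp only [acoef, a1, a2, a3, a4, a5, a6, Nat.factorial_succ, Nat.choose_succ_succ,
    pow_add, pow_succ, efl, eD]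
  have h1 := (factorial_cast_pos (m-l-2)).ne'
  have h2 := (factorial_cast_pos (m+k-1)).ne'
  have h3 : (m:ℝ) + k ≠ 0 := by
    have : (1:ℝ) ≤ (m:ℝ) := by exact_mod_cast (by omega : 1 ≤ m)
    have : (0:ℝ) ≤ (k:ℝ) := Nat.cast_nonneg k
    intro h; linarith
  have h5 : (m:ℝ) - l - 1 ≠ 0 := by
    have : ((l+2:ℕ):ℝ) ≤ (m:ℝ) := by exact_mod_cast hml
    push_cast at this
    intro h; linarith
  push_cast
  rw [dR, dQ]
  simp only [sub_add_cancel]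
  field_simp
  all_goals ring_nf
  all_goals tauto

end identK

lemma acoef_22 (m : ℕ) (hm : 3 ≤ m) : acoef m 2 2 = 16*((m:ℝ)-1)*((m:ℝ)-2) := by
  have a1 : m + 2 - 1 = m + 1 := by omega
  have a2 : m - 2 + 2 - 1 = ((m-3)+1)+1 := by omega
  have a3 : m - 2 - 1 = m - 3 := by omega
  have d1 : ((m-3 : ℕ):ℝ) = (m:ℝ) - 3 := by
    rw [Nat.cast_sub (by omega : 3 ≤ m)]; push_cast; ring
  simp only [acoef, a1, a2, a3, Nat.factorial_succ, Nat.choose_self]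
  have h1 := (factorial_cast_pos (m-3)).ne'
  have h2 := (factorial_cast_pos (m+1)).ne'
  push_cast
  rw [d1]
  field_simp
  ring

lemma identK (m l k : ℕ) (hl : 1 ≤ l) (hml : l + 2 ≤ m) (hk : k ≤ l) :
    acoef m (k+1) (l+1) =
      16*(4*((k:ℝ)+2)*(((k:ℝ)+2)+(m:ℝ)-1))*acoef m (k+2) l
      + (8*(4*((k:ℝ)+1)*(((k:ℝ)+1)+(m:ℝ)-1)) - 4*(8*(l:ℝ)*(2*((k:ℝ)+1)+(m:ℝ))))*acoef m (k+1) l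
      + (4*(k:ℝ)*((k:ℝ)+(m:ℝ)-1) - 8*(l:ℝ)*(2*(k:ℝ)+(m:ℝ)) + 8*(l:ℝ)*(2*(l:ℝ)+1))*acoef m k l := by
  rcases le_or_gt (k+2) (2*l) with hk2 | hk2
  · -- generic case
    have hc1 : ((l.choose (k+1) : ℕ):ℝ) = ((l:ℝ)-k) * (l.choose k) / ((k:ℝ)+1) := by
      have h := choose_rel l k
      have hk1 : ((k:ℝ)+1) ≠ 0 := by positivity
      field_simp
      linarith
    have hc2 : ((l.choose (k+2) : ℕ):ℝ)
        = ((l:ℝ)-k-1) * (((l:ℝ)-k) * (l.choose k) / ((k:ℝ)+1)) / ((k:ℝ)+2) := by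
      have h := choose_rel l (k+1)
      push_cast at h
      rw [hc1] at h
      have hk1 : ((k:ℝ)+1) ≠ 0 := by positivity
      have hk2' : ((k:ℝ)+2) ≠ 0 := by positivity
      field_simp at h ⊢
      linarith
    rw [acoefBk m l k hml hk2, acoefB1 m l k hml hk2, acoefB2 m l k hml hk2,
      acoefB' m l k hml hk2, hc1, hc2]
    have h1 := (factorial_cast_pos (m-l-1)).ne'
    have h2 := (factorial_cast_pos (m+k-1)).ne'
    have h3 : (m:ℝ) + k ≠ 0 := by
      have : (1:ℝ) ≤ (m:ℝ) := by exact_mod_cast (by omega : 1 ≤ m)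
      have : (0:ℝ) ≤ (k:ℝ) := Nat.cast_nonneg k
      intro h; linarith
    have h4 : (m:ℝ) + k + 1 ≠ 0 := by
      have : (1:ℝ) ≤ (m:ℝ) := by exact_mod_cast (by omega : 1 ≤ m)
      have : (0:ℝ) ≤ (k:ℝ) := Nat.cast_nonneg k
      intro h; linarith
    have hk1 : ((k:ℝ)+1) ≠ 0 := by positivity
    have hk2' : ((k:ℝ)+2) ≠ 0 := by positivity
    field_simp
    ring
  · -- special case: k = 1, l = 1
    obtain ⟨rfl, rfl⟩ : k = 1 ∧ l = 1 := by omega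
    rw [acoef_eq_zero m 3 1 (by norm_num), acoef_eq_zero m 2 1 (by norm_num),
      acoef_22 m (by omega), acoef_11 m (by omega)]
    push_cast
    ring

def Uf (m l : ℕ) (s : ℝ) (j : ℕ) : ℝ :=
  16*(4*(j:ℝ)*((j:ℝ)+(m:ℝ)-1)) * acoef m j l * s^(j-1)
def Vf (m l : ℕ) (s : ℝ) (j : ℕ) : ℝ :=
  (8*(4*(j:ℝ)*((j:ℝ)+(m:ℝ)-1)) - 4*(8*(l:ℝ)*(2*(j:ℝ)+(m:ℝ)))) * acoef m j l * s^j
def Wf (m l : ℕ) (s : ℝ) : ℕ → ℝ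
  | 0 => 0
  | (i+1) => (4*(i:ℝ)*((i:ℝ)+(m:ℝ)-1) - 8*(l:ℝ)*(2*(i:ℝ)+(m:ℝ)) + 8*(l:ℝ)*(2*(l:ℝ)+1))
      * acoef m i l * s^(i+1)

lemma key_poly (m l : ℕ) (hl : 1 ≤ l) (hml : l + 2 ≤ m) (s : ℝ) :
    ∑ k ∈ Finset.range (l+1), (Uf m l s k + Vf m l s k + Wf m l s (k+1))
      = ∑ j ∈ Finset.range (l+2), acoef m j (l+1) * s^j := by
  have hU0 : Uf m l s 0 = 0 := by simp [Uf]
  have hU1 : Uf m l s (l+1) = 0 := by simp [Uf, acoef_eq_zero m (l+1) l (by omega)]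
  have hU2 : Uf m l s (l+2) = 0 := by simp [Uf, acoef_eq_zero m (l+2) l (by omega)]
  have hV1 : Vf m l s (l+1) = 0 := by simp [Vf, acoef_eq_zero m (l+1) l (by omega)]
  have e1 : ∑ k ∈ Finset.range (l+1), Uf m l s k
      = ∑ j ∈ Finset.range (l+2), Uf m l s (j+1) := by
    rw [Finset.sum_range_succ' (Uf m l s) l, Finset.sum_range_succ, Finset.sum_range_succ]
    rw [hU0, hU1, hU2]
    ring
  have e2 : ∑ k ∈ Finset.range (l+1), Vf m l s k
      = ∑ j ∈ Finset.range (l+2), Vf m l s j := by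
    rw [Finset.sum_range_succ (Vf m l s) (l+1), hV1, add_zero]
  have e3 : ∑ k ∈ Finset.range (l+1), Wf m l s (k+1)
      = ∑ j ∈ Finset.range (l+2), Wf m l s j := by
    rw [Finset.sum_range_succ' (Wf m l s) (l+1)]
    simp [Wf]
  rw [Finset.sum_add_distrib, Finset.sum_add_distrib, e1, e2, e3,
    ← Finset.sum_add_distrib, ← Finset.sum_add_distrib]
  apply Finset.sum_congr rfl
  intro j hj
  rcases j with _ | i
  · -- j = 0
    have h0 := ident0 m l hl hml
    simp only [Uf, Vf, Wf, pow_zero]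
    push_cast
    rw [h0]
    ring
  · have hi : i ≤ l := by
      simp only [Finset.mem_range] at hj; omega
    have hK := identK m l i hl hml hi
    simp only [Uf, Vf, Wf, Nat.add_sub_cancel]
    push_cast
    rw [hK]
    ring

lemma key_div (m l : ℕ) (hl : 1 ≤ l) (hml : l + 2 ≤ m) (s : ℝ) (hs : 0 ≤ s) :
    4*s*(∑ k ∈ Finset.range (l+1), D2 (acoef m k l) k (2*l) s)
      + 4*(m:ℝ)*(∑ k ∈ Finset.range (l+1), D1 (acoef m k l) k (2*l) s)
    = ∑ j ∈ Finset.range (l+2), acoef m j (l+1) * s^j / (4+s)^(2*l+2) := by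
  have hw : (4:ℝ) + s ≠ 0 := by positivity
  have rhseq : ∑ j ∈ Finset.range (l+2), acoef m j (l+1) * s^j / (4+s)^(2*l+2)
      = (∑ j ∈ Finset.range (l+2), acoef m j (l+1) * s^j) / (4+s)^(2*l+2) := by
    rw [Finset.sum_div]
  rw [rhseq, ← key_poly m l hl hml s, Finset.sum_div, Finset.mul_sum, Finset.mul_sum,
    ← Finset.sum_add_distrib]
  apply Finset.sum_congr rfl
  intro k _
  simp only [D1, D2, Uf, Vf, Wf]
  rcases k with _ | _ | k
  · push_cast
    field_simp
    ring
  · push_cast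
    field_simp
    ring
  · simp only [Nat.add_sub_cancel, show k+2-2 = k from by omega]
    push_cast
    field_simp
    ring

lemma base_case (m : ℕ) (hm : 2 ≤ m) (y : EuclideanSpace ℝ (Fin (2*m))) :
    lap (eta0 m) y = ((m:ℝ)/betaStar m) *
      ∑ k ∈ Finset.range 2, acoef m k 1 * ‖y‖^(2*k) / (4+‖y‖^2)^(2*1) := by
  set c := (m:ℝ)/betaStar m with hc
  have H1 : ∀ s:ℝ, 0 ≤ s → HasDerivAt (fun s : ℝ => -c * Real.log (1+s/4)) (-c/(4+s)) s := by
    intro s hs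
    have hpos : (0:ℝ) < 1 + s/4 := by linarith
    have hlog : HasDerivAt (fun s : ℝ => Real.log (1+s/4)) ((1/4)/(1+s/4)) s := by
      have hlin : HasDerivAt (fun s : ℝ => 1 + s/4) (1/4) s :=
        ((hasDerivAt_id s).div_const 4).const_add 1
      simpa using hlin.log (ne_of_gt hpos)
    have : HasDerivAt (fun s : ℝ => -c * Real.log (1+s/4)) _ s := hlog.const_mul (-c)
    convert this using 1
    have h4 : (4:ℝ) + s ≠ 0 := by positivity
    field_simp
  have H2 : ∀ s:ℝ, 0 ≤ s → HasDerivAt (fun s : ℝ => -c/(4+s)) (c/(4+s)^2) s := by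
    intro s hs
    have h4 : (4:ℝ) + s ≠ 0 := by positivity
    have : HasDerivAt (fun s : ℝ => -c/(4+s)) _ s :=
      (hasDerivAt_const s (-c)).div ((hasDerivAt_id s).const_add 4) h4
    convert this using 1
    field_simp
    ring
  have he : eta0 m = fun z : EuclideanSpace ℝ (Fin (2*m)) =>
      (fun s : ℝ => -c * Real.log (1+s/4)) (‖z‖^2) := by
    funext z
    simp only [eta0, hc]
  rw [he, lap_radial _ _ _ H1 H2 y]
  rw [Finset.sum_range_succ, Finset.sum_range_succ, Finset.sum_range_zero,
    acoef_01 m hm, acoef_11 m hm]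
  have h4 : (4:ℝ) + ‖y‖^2 ≠ 0 := by positivity
  push_cast
  field_simp
  ring

theorem statement15 (m : ℕ) (hm : 2 ≤ m) (l : ℕ) (hl1 : 1 ≤ l) (hlm : l ≤ m - 1)
    (y : EuclideanSpace ℝ (Fin (2*m))) :
    iterLap l (eta0 m) y =
      ((m : ℝ) / betaStar m) *
        ∑ k ∈ Finset.range (l+1), acoef m k l * ‖y‖^(2*k) / (4 + ‖y‖^2)^(2*l) := by
  revert hlm y
  induction l, hl1 using Nat.le_induction with
  | base =>
    intro hlm y
    have : iterLap 1 (eta0 m) y = lap (eta0 m) y := by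
      simp [iterLap]
    rw [this, base_case m hm y]
  | succ l hl IH =>
    intro hlm y
    have hml : l + 2 ≤ m := by omega
    have IH' := IH (by omega)
    set c := (m:ℝ)/betaStar m with hc
    have hfun : iterLap l (eta0 m) = fun z : EuclideanSpace ℝ (Fin (2*m)) =>
        (fun s : ℝ => ∑ k ∈ Finset.range (l+1), D0 (c * acoef m k l) k (2*l) s) (‖z‖^2) := by
      funext z
      rw [IH' z]
      simp only [D0]
      rw [Finset.mul_sum]
      apply Finset.sum_congr rfl
      intro k _
      rw [pow_mul]
      ring
    have step : iterLap (l+1) (eta0 m) y = lap (iterLap l (eta0 m)) y := by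
      simp only [iterLap, Function.iterate_succ_apply']
    have HH1 : ∀ s:ℝ, 0 ≤ s → HasDerivAt
        (fun s : ℝ => ∑ k ∈ Finset.range (l+1), D0 (c * acoef m k l) k (2*l) s)
        (∑ k ∈ Finset.range (l+1), D1 (c * acoef m k l) k (2*l) s) s := by
      intro s hs
      exact HasDerivAt.fun_sum (fun k _ => D0_hasDerivAt _ k (2*l) (by omega) hs)
    have HH2 : ∀ s:ℝ, 0 ≤ s → HasDerivAt
        (fun s : ℝ => ∑ k ∈ Finset.range (l+1), D1 (c * acoef m k l) k (2*l) s)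
        (∑ k ∈ Finset.range (l+1), D2 (c * acoef m k l) k (2*l) s) s := by
      intro s hs
      exact HasDerivAt.fun_sum (fun k _ => D1_hasDerivAt _ k (2*l) hs)
    rw [step, hfun, lap_radial _ _ _ HH1 HH2 y]
    have hsplit1 : (∑ k ∈ Finset.range (l+1), D1 (c*acoef m k l) k (2*l) (‖y‖^2))
        = c * ∑ k ∈ Finset.range (l+1), D1 (acoef m k l) k (2*l) (‖y‖^2) := by
      rw [Finset.mul_sum]
      apply Finset.sum_congr rfl
      intro k _
      simp only [D1]
      ring
    have hsplit2 : (∑ k ∈ Finset.range (l+1), D2 (c*acoef m k l) k (2*l) (‖y‖^2))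
        = c * ∑ k ∈ Finset.range (l+1), D2 (acoef m k l) k (2*l) (‖y‖^2) := by
      rw [Finset.mul_sum]
      apply Finset.sum_congr rfl
      intro k _
      simp only [D2]
      ring
    rw [hsplit1, hsplit2]
    have hkey := key_div m l hl hml (‖y‖^2) (by positivity)
    have lhs_eq : 4*‖y‖^2*(c * ∑ k ∈ Finset.range (l+1), D2 (acoef m k l) k (2*l) (‖y‖^2))
        + 2*((2*m : ℕ):ℝ)*(c * ∑ k ∈ Finset.range (l+1), D1 (acoef m k l) k (2*l) (‖y‖^2))
        = c * (4*‖y‖^2*(∑ k ∈ Finset.range (l+1), D2 (acoef m k l) k (2*l) (‖y‖^2))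
            + 4*(m:ℝ)*(∑ k ∈ Finset.range (l+1), D1 (acoef m k l) k (2*l) (‖y‖^2))) := by
      push_cast
      ring
    rw [lhs_eq, hkey]
    congr 1
    apply Finset.sum_congr rfl
    intro j _
    rw [pow_mul, show 2*(l+1) = 2*l+2 from by ring]
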